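/- For every complex number z and integer j ≥ 0, the scalar double-argument formula holds: φ_j(2z) = 2^{-j} ( e^z·φ_j(z) + Σ_{k=1}^{j} φ_k(z)/(j−k)! ). -/

import Mathlib

/-- The `φ`-functions: `φ_0(z) = e^z` and `φ_j(z) = ∑_{k=0}^∞ z^k/(k+j)!` for `j ≥ 1`. -/
noncomputable def phiFun (j : ℕ) (z : ℂ) : ℂ :=
  if j = 0 then Complex.exp z else ∑' k : ℕ, z ^ k / ((k + j).factorial : ℂ)


lemma phi_summable (j : ℕ) (z : ℂ) :
    Summable (fun k : ℕ => z ^ k / ((k + j).factorial : ℂ)) := by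
  apply Summable.of_norm
  refine Summable.of_nonneg_of_le (fun k => norm_nonneg _) (fun k => ?_)
    (Real.summable_pow_div_factorial ‖z‖)
  rw [norm_div, norm_pow, Complex.norm_natCast]
  apply div_le_div_of_nonneg_left (by positivity) (by positivity)
  exact_mod_cast Nat.factorial_le (Nat.le_add_right k j)

lemma phi_eq_tsum (j : ℕ) (z : ℂ) :
    phiFun j z = ∑' k : ℕ, z ^ k / ((k + j).factorial : ℂ) := by
  rcases Nat.eq_zero_or_pos j with h | h
  · subst h
    rw [phiFun, if_pos rfl, Complex.exp_eq_exp_ℂ, NormedSpace.exp_eq_tsum_div]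
    simp
  · rw [phiFun, if_neg h.ne']

lemma phi_rec (j : ℕ) (z : ℂ) :
    z * phiFun (j + 1) z = phiFun j z - 1 / (j.factorial : ℂ) := by
  rw [phi_eq_tsum, phi_eq_tsum, ← tsum_mul_left,
    Summable.tsum_eq_zero_add (phi_summable j z)]
  simp only [pow_zero, Nat.zero_add]
  rw [add_sub_cancel_left]
  congr 1 with k
  rw [show k + 1 + j = k + (j + 1) from by omega, ← mul_div_assoc, ← pow_succ']

lemma phi_zero (j : ℕ) : phiFun j 0 = 1 / (j.factorial : ℂ) := by
  rw [phi_eq_tsum, tsum_eq_single 0 (fun k hk => by simp [zero_pow hk])]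
  simp

lemma sum_inv_fact (j : ℕ) :
    ∑ k ∈ Finset.range (j + 1), (1 : ℂ) / (k.factorial * (j - k).factorial) =
      2 ^ j / (j.factorial : ℂ) := by
  have h : ∀ k ∈ Finset.range (j + 1),
      (1 : ℂ) / (k.factorial * (j - k).factorial) = (j.choose k : ℂ) / j.factorial := by
    intro k hk
    rw [Nat.cast_choose ℂ (Finset.mem_range_succ_iff.mp hk)]
    have h0 : (j.factorial : ℂ) ≠ 0 := Nat.cast_ne_zero.mpr j.factorial_ne_zero
    have h1 : (k.factorial : ℂ) ≠ 0 := Nat.cast_ne_zero.mpr k.factorial_ne_zero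
    have h2 : ((j - k).factorial : ℂ) ≠ 0 := Nat.cast_ne_zero.mpr (j - k).factorial_ne_zero
    field_simp
  rw [Finset.sum_congr rfl h, ← Finset.sum_div]
  norm_cast
  rw [Nat.sum_range_choose]

lemma Icc_sum (j : ℕ) (f : ℕ → ℂ) :
    ∑ k ∈ Finset.Icc 1 j, f k = ∑ i ∈ Finset.range j, f (i + 1) := by
  rw [← Finset.Ico_add_one_right_eq_Icc, Finset.sum_Ico_eq_sum_range]
  simp [add_comm]

lemma phi_zero' (z : ℂ) : phiFun 0 z = Complex.exp z := if_pos rfl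

lemma phi_sum_rec (j : ℕ) (z : ℂ) :
    z * ∑ k ∈ Finset.Icc 1 (j + 1), phiFun k z / (((j + 1 - k).factorial : ℂ))
      = Complex.exp z / (j.factorial : ℂ)
        + (∑ k ∈ Finset.Icc 1 j, phiFun k z / (((j - k).factorial : ℂ)))
        - 2 ^ j / (j.factorial : ℂ) := by
  rw [Icc_sum, Icc_sum, Finset.mul_sum]
  have e1 : ∀ i ∈ Finset.range (j + 1),
      z * (phiFun (i + 1) z / (((j + 1 - (i + 1)).factorial : ℂ)))
        = phiFun i z / (((j - i).factorial : ℂ))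
          - 1 / ((i.factorial : ℂ) * ((j - i).factorial : ℂ)) := by
    intro i hi
    rw [show j + 1 - (i + 1) = j - i from by omega, ← mul_div_assoc, phi_rec i z,
      sub_div, div_div]
  rw [Finset.sum_congr rfl e1, Finset.sum_sub_distrib, sum_inv_fact j,
    Finset.sum_range_succ', Nat.sub_zero, phi_zero']
  ring

/-- Scalar double-argument formula:
`φ_j(2z) = 2^{-j} (e^z·φ_j(z) + ∑_{k=1}^{j} φ_k(z)/(j−k)!)`. -/
theorem phi_double_argument (z : ℂ) (j : ℕ) :
    phiFun j (2 * z) =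
      ((2 : ℂ) ^ j)⁻¹ *
        (Complex.exp z * phiFun j z +
          ∑ k ∈ Finset.Icc 1 j, phiFun k z / (((j - k).factorial : ℂ))) := by
  induction j with
  | zero => simp [phiFun, two_mul, Complex.exp_add]
  | succ j IH =>
    by_cases hz : z = 0
    · subst hz
      have hS := sum_inv_fact (j + 1)
      rw [Finset.sum_range_succ'] at hS
      simp only [Nat.succ_sub_succ] at hS
      simp only [phi_zero, Complex.exp_zero, mul_zero, Icc_sum, Nat.succ_sub_succ, div_div]
      have h2 : ((2 : ℂ) ^ (j + 1)) ≠ 0 := pow_ne_zero _ two_ne_zero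
      have hf : (((j + 1).factorial : ℂ)) ≠ 0 := Nat.cast_ne_zero.mpr (j + 1).factorial_ne_zero
      rw [show (∑ i ∈ Finset.range (j + 1),
          (1 : ℂ) / ((i + 1).factorial * ((j - i).factorial : ℂ))) =
          2 ^ (j + 1) / ((j + 1).factorial : ℂ) - 1 / ((0 : ℕ).factorial * ((j + 1 - 0).factorial : ℂ)) from by
        linear_combination hS]
      simp only [Nat.factorial_zero, Nat.sub_zero, Nat.cast_one, one_mul]
      field_simp
      ring
    · have h2z : (2 : ℂ) * z ≠ 0 := mul_ne_zero two_ne_zero hz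
      apply mul_left_cancel₀ h2z
      have h1 := phi_rec j (2 * z)
      have h3 := phi_rec j z
      have h4 := phi_sum_rec j z
      have h6 : ((2 : ℂ) ^ j)⁻¹ * 2 ^ j = 1 := inv_mul_cancel₀ (pow_ne_zero _ two_ne_zero)
      rw [pow_succ, mul_inv]
      linear_combination h1 + IH - ((2 : ℂ) ^ j)⁻¹ * Complex.exp z * h3
        - ((2 : ℂ) ^ j)⁻¹ * h4 + (1 / (j.factorial : ℂ)) * h6
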